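/- Let H be a finite-dimensional complex Hilbert space, ρ ∈ D(H), and let k, n be integers with 0 ≤ k ≤ n. For any ω ∈ D(H^{⊗k}), the symmetrised locally-defective state satisfies (1/n)·‖ (1/n!) Σ_{π∈S_n} U_π (ρ^{⊗(n−k)} ⊗ ω) U_π† − ρ^{⊗n} ‖_{W1} ≤ k/n, where U_π is the unitary permuting the tensor factors of H^{⊗n} according to π. -/

import Mathlib

open scoped BigOperators ComplexOrder
open Filter Matrix

noncomputable section

namespace AlmostIID

/-- The trace norm `‖A‖₁ = Tr √(A†A)` of a square complex matrix. -/
def traceNorm {m : Type*} [Fintype m] [DecidableEq m] (A : Matrix m m ℂ) : ℝ :=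
  (((Matrix.posSemidef_conjTranspose_mul_self A).1.eigenvectorUnitary.1 *
      Matrix.diagonal (((↑) : ℝ → ℂ) ∘ (√·) ∘ (Matrix.posSemidef_conjTranspose_mul_self A).1.eigenvalues) *
      (star (Matrix.posSemidef_conjTranspose_mul_self A).1.eigenvectorUnitary : Matrix m m ℂ)).trace).re

/-- A density matrix (state): positive semidefinite with unit trace. -/
def IsState {m : Type*} [Fintype m] (M : Matrix m m ℂ) : Prop :=
  M.PosSemidef ∧ M.trace = 1

/-- The marginal (reduced density matrix) of an `n`-partite operator on the
coordinates in `I`, i.e. the partial trace over the complement of `I`. -/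
def marginal {κ : Type*} [Fintype κ] {n : ℕ}
    (M : Matrix (Fin n → κ) (Fin n → κ) ℂ) (I : Finset (Fin n)) :
    Matrix ({i : Fin n // i ∈ I} → κ) ({i : Fin n // i ∈ I} → κ) ℂ :=
  fun a b => ∑ f : {i : Fin n // i ∉ I} → κ,
    M (fun i => if h : i ∈ I then a ⟨i, h⟩ else f ⟨i, h⟩)
      (fun i => if h : i ∈ I then b ⟨i, h⟩ else f ⟨i, h⟩)

/-- The single-site reduced density matrix on the `i`-th tensor factor. -/
def siteMarginal {κ : Type*} [Fintype κ] {n : ℕ}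
    (M : Matrix (Fin n → κ) (Fin n → κ) ℂ) (i : Fin n) : Matrix κ κ ℂ :=
  fun a b => ∑ f : {j : Fin n // j ≠ i} → κ,
    M (fun j => if h : j = i then a else f ⟨j, h⟩)
      (fun j => if h : j = i then b else f ⟨j, h⟩)

/-- The i.i.d. product state `ρ^{⊗ι}` on the tensor factors indexed by `ι`. -/
def iidOn {κ : Type*} (ι : Type*) [Fintype ι] (ρ : Matrix κ κ ℂ) :
    Matrix (ι → κ) (ι → κ) ℂ :=
  fun a b => ∏ i, ρ (a i) (b i)

/-- The product state `φ 0 ⊗ φ 1 ⊗ ⋯`. -/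
def prodState {κ : Type*} {ι : Type*} [Fintype ι] (φ : ι → Matrix κ κ ℂ) :
    Matrix (ι → κ) (ι → κ) ℂ :=
  fun a b => ∏ i, φ i (a i) (b i)

/-- The quantum Wasserstein norm of order 1 of a difference of states:
the minimum of `Σ cᵢ` over decompositions `X = Σ cᵢ (τ⁽ⁱ⁾ − η⁽ⁱ⁾)` with `cᵢ ≥ 0`,
`τ⁽ⁱ⁾, η⁽ⁱ⁾` states with equal partial traces over the `i`-th factor. -/
def W1 {κ : Type*} [Fintype κ] [DecidableEq κ] {n : ℕ}
    (X : Matrix (Fin n → κ) (Fin n → κ) ℂ) : ℝ :=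
  sInf { w : ℝ |
    ∃ (c : Fin n → ℝ) (τ η : Fin n → Matrix (Fin n → κ) (Fin n → κ) ℂ),
      (∀ i, 0 ≤ c i) ∧ (∀ i, IsState (τ i)) ∧ (∀ i, IsState (η i)) ∧
      (∀ i, marginal (τ i) ({i}ᶜ : Finset (Fin n)) = marginal (η i) ({i}ᶜ : Finset (Fin n))) ∧
      X = ∑ i, c i • (τ i - η i) ∧ w = ∑ i, c i }

/-- The local variation norm. -/
def LV {κ : Type*} [Fintype κ] [DecidableEq κ] {n : ℕ}
    (X : Matrix (Fin n → κ) (Fin n → κ) ℂ) : ℝ :=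
  (1/2) * ∑ k ∈ Finset.Icc 1 n, ((2:ℝ)^k)⁻¹ *
    (((n.choose k : ℝ))⁻¹ *
      ∑ I ∈ Finset.powersetCard k (Finset.univ : Finset (Fin n)),
        traceNorm (marginal X I))


/-- The action of the permutation unitary `U_π` on an operator of `H^{⊗n}`:
`(U_π M U_π†)`. -/
def permAction {κ : Type*} {n : ℕ} (π : Equiv.Perm (Fin n))
    (M : Matrix (Fin n → κ) (Fin n → κ) ℂ) : Matrix (Fin n → κ) (Fin n → κ) ℂ :=
  fun a b => M (fun i => a (π i)) (fun i => b (π i))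

/-- The locally defective state `ρ^{⊗(n−k)} ⊗ ω` on `H^{⊗n}`. -/
def defectState {κ : Type*} [Fintype κ] (n k : ℕ) (hkn : k ≤ n)
    (ρ : Matrix κ κ ℂ) (ω : Matrix (Fin k → κ) (Fin k → κ) ℂ) :
    Matrix (Fin n → κ) (Fin n → κ) ℂ :=
  fun a b =>
    (∏ i : Fin (n - k),
        ρ (a (Fin.castLE (Nat.sub_le n k) i)) (b (Fin.castLE (Nat.sub_le n k) i))) *
      ω (fun j => a ⟨n - k + j.val, by have := j.isLt; omega⟩)
        (fun j => b ⟨n - k + j.val, by have := j.isLt; omega⟩)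

lemma posSemidef_real_smul {m : Type*} [Fintype m] {M : Matrix m m ℂ}
    (hM : M.PosSemidef) {r : ℝ} (hr : 0 ≤ r) : (r • M).PosSemidef := by
  exact hM.smul hr

lemma posSemidef_sum {m θ : Type*} [Fintype m] {s : Finset θ}
    {f : θ → Matrix m m ℂ} (hf : ∀ q ∈ s, (f q).PosSemidef) :
    (∑ q ∈ s, f q).PosSemidef :=
  Finset.sum_induction f _ (fun _ _ ha hb => ha.add hb) Matrix.PosSemidef.zero hf

open scoped MatrixOrder in
/-- The positive square root of a positive semidefinite matrix. -/
def _root_.Matrix.PosSemidef.sqrt {m : Type*} [Fintype m] [DecidableEq m] {M : Matrix m m ℂ}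
    (_hM : M.PosSemidef) : Matrix m m ℂ := CFC.sqrt M

open scoped MatrixOrder in
lemma _root_.Matrix.PosSemidef.posSemidef_sqrt {m : Type*} [Fintype m] [DecidableEq m]
    {M : Matrix m m ℂ} (hM : M.PosSemidef) : hM.sqrt.PosSemidef :=
  (CFC.sqrt_nonneg M).posSemidef

open scoped MatrixOrder in
lemma _root_.Matrix.PosSemidef.sqrt_mul_self {m : Type*} [Fintype m] [DecidableEq m]
    {M : Matrix m m ℂ} (hM : M.PosSemidef) : hM.sqrt * hM.sqrt = M :=
  CFC.sqrt_mul_sqrt_self M hM.nonneg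

lemma sqrt_inner {m : Type*} [Fintype m] [DecidableEq m] {M : Matrix m m ℂ}
    (hM : M.PosSemidef) (u v : m) :
    ∑ x, star (hM.sqrt x u) * hM.sqrt x v = M u v := by
  have hh : hM.sqrt.IsHermitian := hM.posSemidef_sqrt.1
  calc ∑ x, star (hM.sqrt x u) * hM.sqrt x v
      = ∑ x, hM.sqrt u x * hM.sqrt x v := by
        refine Finset.sum_congr rfl fun x _ => ?_
        rw [hh.apply u x]
    _ = (hM.sqrt * hM.sqrt) u v := (Matrix.mul_apply).symm
    _ = M u v := by rw [hM.sqrt_mul_self]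

lemma isState_prodState {κ ι : Type*} [Fintype κ] [DecidableEq κ] [Fintype ι] [DecidableEq ι]
    {φ : ι → Matrix κ κ ℂ} (hφ : ∀ i, IsState (φ i)) : IsState (prodState φ) := by
  constructor
  · have key : prodState φ =
        (prodState (fun i => (hφ i).1.sqrt))ᴴ * prodState (fun i => (hφ i).1.sqrt) := by
      ext a b
      rw [Matrix.mul_apply]
      simp only [Matrix.conjTranspose_apply, prodState]
      refine Eq.symm ?_
      calc ∑ c : ι → κ, star (∏ i, (hφ i).1.sqrt (c i) (a i)) * ∏ i, (hφ i).1.sqrt (c i) (b i)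
          = ∑ c : ι → κ, ∏ i, star ((hφ i).1.sqrt (c i) (a i)) * (hφ i).1.sqrt (c i) (b i) := by
            refine Finset.sum_congr rfl fun c _ => ?_
            rw [star_prod, Finset.prod_mul_distrib]
        _ = ∏ i, ∑ x, star ((hφ i).1.sqrt x (a i)) * (hφ i).1.sqrt x (b i) := by
            rw [Finset.prod_univ_sum, Fintype.piFinset_univ]
        _ = ∏ i, φ i (a i) (b i) := by
            exact Finset.prod_congr rfl fun i _ => sqrt_inner (hφ i).1 (a i) (b i)
    rw [key]
    exact Matrix.posSemidef_conjTranspose_mul_self _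
  · have : (prodState φ).trace = ∏ i, (φ i).trace := by
      simp only [Matrix.trace, Matrix.diag, prodState]
      rw [Finset.prod_univ_sum, Fintype.piFinset_univ]
    rw [this]
    simp [fun i => (hφ i).2]

lemma isState_glue {γ A B : Type*} [Fintype γ] [Fintype A] [Fintype B]
    [DecidableEq A] [DecidableEq B]
    (e : γ ≃ A × B) {M : Matrix A A ℂ} {N : Matrix B B ℂ}
    (hM : IsState M) (hN : IsState N) :
    IsState (fun a b => M (e a).1 (e b).1 * N (e a).2 (e b).2 : Matrix γ γ ℂ) := by
  constructor
  · set Q : Matrix (A × B) γ ℂ := fun p a => hM.1.sqrt p.1 (e a).1 * hN.1.sqrt p.2 (e a).2 with hQ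
    have key : (fun a b => M (e a).1 (e b).1 * N (e a).2 (e b).2 : Matrix γ γ ℂ) = Qᴴ * Q := by
      ext a b
      rw [Matrix.mul_apply]
      simp only [Matrix.conjTranspose_apply, hQ]
      rw [Fintype.sum_prod_type]
      calc M (e a).1 (e b).1 * N (e a).2 (e b).2
          = (∑ x, star (hM.1.sqrt x (e a).1) * hM.1.sqrt x (e b).1) *
            (∑ y, star (hN.1.sqrt y (e a).2) * hN.1.sqrt y (e b).2) := by
            rw [sqrt_inner, sqrt_inner]
        _ = ∑ x, ∑ y, (star (hM.1.sqrt x (e a).1) * hM.1.sqrt x (e b).1) *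
              (star (hN.1.sqrt y (e a).2) * hN.1.sqrt y (e b).2) := by
            rw [Finset.sum_mul_sum]
        _ = ∑ x, ∑ y, star (hM.1.sqrt x (e a).1 * hN.1.sqrt y (e a).2) *
              (hM.1.sqrt x (e b).1 * hN.1.sqrt y (e b).2) := by
            refine Finset.sum_congr rfl fun x _ => Finset.sum_congr rfl fun y _ => ?_
            simp only [star_mul']
            ring
    rw [key]
    exact Matrix.posSemidef_conjTranspose_mul_self _
  · have : Matrix.trace (fun a b => M (e a).1 (e b).1 * N (e a).2 (e b).2 : Matrix γ γ ℂ)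
        = M.trace * N.trace := by
      simp only [Matrix.trace, Matrix.diag]
      calc ∑ a : γ, M (e a).1 (e a).1 * N (e a).2 (e a).2
          = ∑ p : A × B, M p.1 p.1 * N p.2 p.2 := Equiv.sum_comp e (fun p => M p.1 p.1 * N p.2 p.2)
        _ = (∑ x : A, M x x) * (∑ y : B, N y y) := by
            rw [Fintype.sum_prod_type]
            exact (Finset.sum_mul_sum Finset.univ Finset.univ (fun x => M x x) (fun y => N y y)).symm
    rw [this, hM.2, hN.2, one_mul]

lemma isState_partial {γ A B : Type*} [Fintype γ] [Fintype A] [Fintype B]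
    [DecidableEq γ] [DecidableEq A] [DecidableEq B]
    (e : γ ≃ A × B) {M : Matrix γ γ ℂ} (hM : IsState M) :
    IsState (fun a b => ∑ g : A, M (e.symm (g, a)) (e.symm (g, b)) : Matrix B B ℂ) := by
  constructor
  · set T : Matrix (γ × A) B ℂ := fun p a => hM.1.sqrt p.1 (e.symm (p.2, a)) with hT
    have key : (fun a b => ∑ g : A, M (e.symm (g, a)) (e.symm (g, b)) : Matrix B B ℂ)
        = Tᴴ * T := by
      ext a b
      rw [Matrix.mul_apply]
      simp only [Matrix.conjTranspose_apply, hT]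
      rw [Fintype.sum_prod_type, Finset.sum_comm]
      exact Finset.sum_congr rfl fun g _ => (sqrt_inner hM.1 _ _).symm
    rw [key]
    exact Matrix.posSemidef_conjTranspose_mul_self _
  · have : Matrix.trace (fun a b => ∑ g : A, M (e.symm (g, a)) (e.symm (g, b)) : Matrix B B ℂ)
        = M.trace := by
      simp only [Matrix.trace, Matrix.diag]
      rw [Finset.sum_comm, ← Fintype.sum_prod_type (fun p : A × B => M (e.symm p) (e.symm p))]
      exact Equiv.sum_comp e.symm (fun c => M c c)
    rw [this, hM.2]



section Construction

variable {κ : Type*} [Fintype κ] [DecidableEq κ]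

/-- The site of the `s`-th defective coordinate. -/
def tailSite (n k : ℕ) (hkn : k ≤ n) (s : Fin k) : Fin n := ⟨n - k + s.1, by omega⟩

/-- The marginal of `ω` on the coordinates `≥ j`. -/
def ωm (k : ℕ) (ω : Matrix (Fin k → κ) (Fin k → κ) ℂ) (j : ℕ) :
    Matrix ({s : Fin k // ¬ (s.1 < j)} → κ) ({s : Fin k // ¬ (s.1 < j)} → κ) ℂ :=
  fun a b => ∑ g : {s : Fin k // s.1 < j} → κ,
    ω (fun s => if h : s.1 < j then g ⟨s, h⟩ else a ⟨s, h⟩)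
      (fun s => if h : s.1 < j then g ⟨s, h⟩ else b ⟨s, h⟩)

/-- The `j`-th interpolating state. -/
def σm (n k : ℕ) (hkn : k ≤ n) (ρ : Matrix κ κ ℂ) (ω : Matrix (Fin k → κ) (Fin k → κ) ℂ)
    (j : ℕ) : Matrix (Fin n → κ) (Fin n → κ) ℂ :=
  fun a b => (∏ t : {t : Fin n // t.1 < n - k + j}, ρ (a t.1) (b t.1)) *
    ωm k ω j (fun s => a (tailSite n k hkn s.1)) (fun s => b (tailSite n k hkn s.1))

lemma isState_ωm {k : ℕ} {ω : Matrix (Fin k → κ) (Fin k → κ) ℂ} (hω : IsState ω) (j : ℕ) :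
    IsState (ωm k ω j) :=
  isState_partial (Equiv.piEquivPiSubtypeProd (fun s : Fin k => s.1 < j) (fun _ => κ)) hω

/-- Splitting `Fin n → κ` into the head and tail coordinates. -/
def splitEquiv (n k : ℕ) (hkn : k ≤ n) (j : ℕ) (hj : j ≤ k) :
    (Fin n → κ) ≃ ({t : Fin n // t.1 < n - k + j} → κ) × ({s : Fin k // ¬ (s.1 < j)} → κ) where
  toFun a := (fun t => a t.1, fun s => a (tailSite n k hkn s.1))
  invFun p := fun t => if h : t.1 < n - k + j then p.1 ⟨t, h⟩
    else p.2 ⟨⟨t.1 - (n - k), by have := t.isLt; omega⟩,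
      by show ¬ (t.1 - (n - k) < j); omega⟩
  left_inv a := by
    funext t
    dsimp only
    split_ifs with h
    · rfl
    · congr 1
      apply Fin.ext
      simp only [tailSite]
      have := t.isLt
      omega
  right_inv p := by
    refine Prod.ext ?_ ?_
    · funext t
      dsimp only
      rw [dif_pos t.2]
    · funext s
      dsimp only
      have hs : ¬ ((tailSite n k hkn s.1).1 < n - k + j) := by
        simp only [tailSite]
        have := s.2
        omega
      rw [dif_neg hs]
      exact congrArg p.2 (Subtype.ext (Fin.ext (by simp only [tailSite]; omega)))

lemma isState_σm {n k : ℕ} (hkn : k ≤ n) {ρ : Matrix κ κ ℂ}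
    {ω : Matrix (Fin k → κ) (Fin k → κ) ℂ} (hρ : IsState ρ) (hω : IsState ω)
    {j : ℕ} (hj : j ≤ k) : IsState (σm n k hkn ρ ω j) := by
  have h := isState_glue (splitEquiv n k hkn j hj)
    (isState_prodState (fun _ : {t : Fin n // t.1 < n - k + j} => hρ)) (isState_ωm hω j)
  have e : σm n k hkn ρ ω j = (fun a b =>
      prodState (fun _ : {t : Fin n // t.1 < n - k + j} => ρ)
          ((splitEquiv n k hkn j hj) a).1 ((splitEquiv n k hkn j hj) b).1 *
        ωm k ω j ((splitEquiv n k hkn j hj) a).2 ((splitEquiv n k hkn j hj) b).2) := by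
    ext a b
    simp only [σm, prodState, splitEquiv, Equiv.coe_fn_mk]
  rw [e]
  exact h

lemma isState_permAction {n : ℕ} (π : Equiv.Perm (Fin n))
    {M : Matrix (Fin n → κ) (Fin n → κ) ℂ} (hM : IsState M) : IsState (permAction π M) := by
  constructor
  · exact hM.1.submatrix (fun a => a ∘ π)
  · have h : Matrix.trace (permAction π M) = Matrix.trace M := by
      simp only [Matrix.trace, Matrix.diag, permAction]
      refine Fintype.sum_equiv (Equiv.arrowCongr π.symm (Equiv.refl κ)) _ _ fun a => ?_
      simp [Equiv.arrowCongr]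
      rfl
    rw [h, hM.2]

lemma permAction_sub {n : ℕ} (π : Equiv.Perm (Fin n))
    (M N : Matrix (Fin n → κ) (Fin n → κ) ℂ) :
    permAction π (M - N) = permAction π M - permAction π N := rfl

lemma permAction_iid {n : ℕ} (π : Equiv.Perm (Fin n)) (ρ : Matrix κ κ ℂ) :
    permAction π (iidOn (Fin n) ρ) = iidOn (Fin n) ρ := by
  ext a b
  simp only [permAction, iidOn]
  exact Equiv.prod_comp π (fun i => ρ (a i) (b i))

lemma σm_top_eq_iid {n k : ℕ} (hkn : k ≤ n) (ρ : Matrix κ κ ℂ)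
    {ω : Matrix (Fin k → κ) (Fin k → κ) ℂ} (hω : IsState ω) :
    σm n k hkn ρ ω k = iidOn (Fin n) ρ := by
  ext a b
  simp only [σm, iidOn]
  have h1 : (∏ t : {t : Fin n // t.1 < n - k + k}, ρ (a t.1) (b t.1))
      = ∏ i : Fin n, ρ (a i) (b i) :=
    Fintype.prod_equiv (Equiv.subtypeUnivEquiv (fun t => by have := t.isLt; omega)) _ _
      (fun t => rfl)
  have h2 : ωm k ω k (fun s => a (tailSite n k hkn s.1)) (fun s => b (tailSite n k hkn s.1))
      = 1 := by
    simp only [ωm]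
    have h3 : ∑ g : {s : Fin k // s.1 < k} → κ,
        ω (fun s => if h : s.1 < k then g ⟨s, h⟩ else a (tailSite n k hkn s))
          (fun s => if h : s.1 < k then g ⟨s, h⟩ else b (tailSite n k hkn s))
        = ∑ g2 : Fin k → κ, ω g2 g2 := by
      refine Fintype.sum_equiv
        (Equiv.arrowCongr (Equiv.subtypeUnivEquiv (fun s : Fin k => s.isLt)) (Equiv.refl κ)) _ _
        fun g => ?_
      congr 1 <;> (funext s; rw [dif_pos s.isLt]; rfl)
    rw [h3]
    exact hω.2
  rw [h1, h2, mul_one]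

lemma defect_eq_σm_zero {n k : ℕ} (hkn : k ≤ n) (ρ : Matrix κ κ ℂ)
    (ω : Matrix (Fin k → κ) (Fin k → κ) ℂ) :
    defectState n k hkn ρ ω = σm n k hkn ρ ω 0 := by
  ext a b
  simp only [defectState, σm]
  congr 1
  · refine Fintype.prod_equiv
      ⟨fun i => ⟨Fin.castLE (Nat.sub_le n k) i, by simpa using i.isLt⟩,
       fun t => ⟨t.1.1, by have := t.2; omega⟩,
       fun i => rfl, fun t => rfl⟩ _ _ fun i => rfl
  · haveI : IsEmpty {s : Fin k // s.1 < 0} := ⟨fun s => by omega⟩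
    simp only [ωm]
    rw [Fintype.sum_unique]
    congr 1 <;> (funext s; rw [dif_neg (by omega)]; rfl)

end Construction


section Marginals

variable {κ : Type*} [Fintype κ] [DecidableEq κ] {n : ℕ}

lemma marginal_sum {θ : Type*} (s : Finset θ) (f : θ → Matrix (Fin n → κ) (Fin n → κ) ℂ)
    (I : Finset (Fin n)) :
    marginal (∑ q ∈ s, f q) I = ∑ q ∈ s, marginal (f q) I := by
  ext a b
  simp only [marginal, Matrix.sum_apply, Finset.sum_apply]
  exact Finset.sum_comm

lemma marginal_smul (r : ℝ) (M : Matrix (Fin n → κ) (Fin n → κ) ℂ) (I : Finset (Fin n)) :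
    marginal (r • M) I = r • marginal M I := by
  ext a b
  simp only [marginal, Matrix.smul_apply, Finset.smul_sum]

instance uniqueNotCompl (i : Fin n) : Unique {t : Fin n // t ∉ ({i}ᶜ : Finset (Fin n))} where
  default := ⟨i, by simp⟩
  uniq t := Subtype.ext (by have := t.2; simpa using this)

lemma marginal_compl_singleton (M : Matrix (Fin n → κ) (Fin n → κ) ℂ) (i : Fin n)
    (a b : {t : Fin n // t ∈ ({i}ᶜ : Finset (Fin n))} → κ) :
    marginal M ({i}ᶜ : Finset (Fin n)) a b = ∑ x : κ,
      M (fun t => if h : t ∈ ({i}ᶜ : Finset (Fin n)) then a ⟨t, h⟩ else x)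
        (fun t => if h : t ∈ ({i}ᶜ : Finset (Fin n)) then b ⟨t, h⟩ else x) := by
  simp only [marginal]
  refine Fintype.sum_equiv (Equiv.funUnique _ κ) _ _ fun f => ?_
  congr 1 <;>
  · funext t
    split_ifs with h
    · rfl
    · exact congrArg f (Subsingleton.elim _ _)

lemma marginal_permAction_congr (π : Equiv.Perm (Fin n))
    {M N : Matrix (Fin n → κ) (Fin n → κ) ℂ} (i : Fin n)
    (h : marginal M ({π.symm i}ᶜ : Finset (Fin n)) =
         marginal N ({π.symm i}ᶜ : Finset (Fin n))) :
    marginal (permAction π M) ({i}ᶜ : Finset (Fin n)) =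
      marginal (permAction π N) ({i}ᶜ : Finset (Fin n)) := by
  have key : ∀ (M : Matrix (Fin n → κ) (Fin n → κ) ℂ)
      (a b : {t : Fin n // t ∈ ({i}ᶜ : Finset (Fin n))} → κ),
      marginal (permAction π M) ({i}ᶜ : Finset (Fin n)) a b
      = marginal M ({π.symm i}ᶜ : Finset (Fin n))
          (fun x => a ⟨π x.1, by
            have hx := x.2
            simp only [Finset.mem_compl, Finset.mem_singleton] at hx ⊢
            exact fun hh => hx ((Equiv.symm_apply_apply π x.1).symm.trans
              (congrArg (fun z => π.symm z) hh))⟩)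
          (fun x => b ⟨π x.1, by
            have hx := x.2
            simp only [Finset.mem_compl, Finset.mem_singleton] at hx ⊢
            exact fun hh => hx ((Equiv.symm_apply_apply π x.1).symm.trans
              (congrArg (fun z => π.symm z) hh))⟩) := by
    intro M a b
    rw [marginal_compl_singleton, marginal_compl_singleton]
    refine Finset.sum_congr rfl fun x _ => ?_
    simp only [permAction]
    congr 1 <;>
    · funext t
      by_cases ht : t = π.symm i
      · rw [dif_neg (by simp [ht]), dif_neg (by simp [ht])]
      · rw [dif_pos (by
            simp only [Finset.mem_compl, Finset.mem_singleton]
            exact fun hh => ht ((Equiv.symm_apply_apply π t).symm.trans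
              (congrArg (fun z => π.symm z) hh))),
          dif_pos (by simpa using ht)]
  ext a b
  rw [key M, key N, h]

/-- Splitting off the `j`-th coordinate of the `< j+1` block. -/
def eJ (k j : ℕ) (hj : j < k) :
    κ × ({s : Fin k // s.1 < j} → κ) ≃ ({s : Fin k // s.1 < j + 1} → κ) where
  toFun p s := if h : s.1.1 < j then p.2 ⟨s.1, h⟩ else p.1
  invFun g' := (g' ⟨⟨j, hj⟩, by show j < j + 1; omega⟩,
    fun s => g' ⟨s.1, by have := s.2; omega⟩)
  left_inv p := by
    refine Prod.ext ?_ ?_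
    · show dite _ _ _ = p.1
      rw [dif_neg (show ¬ (j < j) by omega)]
    · funext s
      show dite _ _ _ = p.2 s
      rw [dif_pos s.2]
  right_inv g' := by
    funext s
    dsimp only
    split_ifs with h
    · rfl
    · exact congrArg g' (Subtype.ext (Fin.ext (by
        have h2 := s.2
        show j = s.1.1
        omega)))

lemma marginal_σm_succ {k : ℕ} (hkn : k ≤ n) {ρ : Matrix κ κ ℂ}
    (ω : Matrix (Fin k → κ) (Fin k → κ) ℂ) (hρ : IsState ρ) {j : ℕ} (hj : j < k) :
    marginal (σm n k hkn ρ ω j) ({tailSite n k hkn ⟨j, hj⟩}ᶜ : Finset (Fin n)) =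
      marginal (σm n k hkn ρ ω (j + 1)) ({tailSite n k hkn ⟨j, hj⟩}ᶜ : Finset (Fin n)) := by
  have hmem : ∀ t : Fin n, t ∈ ({tailSite n k hkn ⟨j, hj⟩}ᶜ : Finset (Fin n)) ↔
      t.1 ≠ n - k + j := by
    intro t
    simp only [Finset.mem_compl, Finset.mem_singleton]
    constructor
    · exact fun h hh => h (Fin.ext hh)
    · exact fun h hh => h (congrArg Fin.val hh)
  ext a b
  rw [marginal_compl_singleton, marginal_compl_singleton]
  -- notation
  have key1 : ∀ x : κ,
      σm n k hkn ρ ω j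
        (fun t => if h : t ∈ ({tailSite n k hkn ⟨j, hj⟩}ᶜ : Finset (Fin n)) then a ⟨t, h⟩ else x)
        (fun t => if h : t ∈ ({tailSite n k hkn ⟨j, hj⟩}ᶜ : Finset (Fin n)) then b ⟨t, h⟩ else x)
      = (∏ t : {t : Fin n // t.1 < n - k + j},
            ρ (a ⟨t.1, (hmem t.1).2 (Nat.ne_of_lt t.2)⟩) (b ⟨t.1, (hmem t.1).2 (Nat.ne_of_lt t.2)⟩)) *
        ∑ g : {s : Fin k // s.1 < j} → κ,
          ω (fun s => if h : s.1 < j then g ⟨s, h⟩ else if h2 : s.1 = j then x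
              else a ⟨tailSite n k hkn s, (hmem _).2 (by simp only [tailSite]; omega)⟩)
            (fun s => if h : s.1 < j then g ⟨s, h⟩ else if h2 : s.1 = j then x
              else b ⟨tailSite n k hkn s, (hmem _).2 (by simp only [tailSite]; omega)⟩) := by
    intro x
    simp only [σm, ωm]
    congr 1
    · refine Finset.prod_congr rfl fun t _ => ?_
      rw [dif_pos ((hmem t.1).2 (Nat.ne_of_lt t.2)), dif_pos ((hmem t.1).2 (Nat.ne_of_lt t.2))]
    · refine Finset.sum_congr rfl fun g _ => ?_
      congr 1 <;>
      · funext s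
        by_cases h1 : s.1 < j
        · rw [dif_pos h1, dif_pos h1]
        · rw [dif_neg h1, dif_neg h1]
          by_cases h2 : s.1 = j
          · rw [dif_pos h2, dif_neg (by
              simp only [Finset.mem_compl, Finset.mem_singleton, not_not]
              exact Fin.ext (by simp only [tailSite]; omega))]
          · rw [dif_neg h2, dif_pos ((hmem _).2 (by simp only [tailSite]; omega))]
  have key2 : ∀ x : κ,
      σm n k hkn ρ ω (j + 1)
        (fun t => if h : t ∈ ({tailSite n k hkn ⟨j, hj⟩}ᶜ : Finset (Fin n)) then a ⟨t, h⟩ else x)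
        (fun t => if h : t ∈ ({tailSite n k hkn ⟨j, hj⟩}ᶜ : Finset (Fin n)) then b ⟨t, h⟩ else x)
      = ρ x x * ((∏ t : {t : Fin n // t.1 < n - k + j},
            ρ (a ⟨t.1, (hmem t.1).2 (Nat.ne_of_lt t.2)⟩) (b ⟨t.1, (hmem t.1).2 (Nat.ne_of_lt t.2)⟩)) *
        ωm k ω (j + 1)
          (fun s => a ⟨tailSite n k hkn s.1, (hmem _).2 (by have := s.2; simp only [tailSite]; omega)⟩)
          (fun s => b ⟨tailSite n k hkn s.1, (hmem _).2 (by have := s.2; simp only [tailSite]; omega)⟩)) := by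
    intro x
    simp only [σm]
    rw [← mul_assoc]
    congr 1
    · -- head product splits off the site `pos`
      have headsplit : ∀ F : Fin n → ℂ,
          (∏ t : {t : Fin n // t.1 < n - k + (j + 1)}, F t.1)
          = F (tailSite n k hkn ⟨j, hj⟩) * ∏ t : {t : Fin n // t.1 < n - k + j}, F t.1 := by
        intro F
        rw [← Finset.prod_subtype
            (Finset.filter (fun t : Fin n => t.1 < n - k + (j + 1)) Finset.univ)
            (fun t => by simp) F,
          ← Finset.prod_subtype
            (Finset.filter (fun t : Fin n => t.1 < n - k + j) Finset.univ)
            (fun t => by simp) F]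
        rw [show Finset.filter (fun t : Fin n => t.1 < n - k + (j + 1)) Finset.univ
            = insert (tailSite n k hkn ⟨j, hj⟩)
                (Finset.filter (fun t : Fin n => t.1 < n - k + j) Finset.univ) from by
          ext t
          simp only [Finset.mem_filter, Finset.mem_univ, true_and, Finset.mem_insert,
            Fin.ext_iff, tailSite]
          omega]
        rw [Finset.prod_insert (by
          simp only [Finset.mem_filter, Finset.mem_univ, true_and, tailSite]
          omega)]
      refine Eq.trans (headsplit (fun v =>
        ρ (if h : v ∈ ({tailSite n k hkn ⟨j, hj⟩}ᶜ : Finset (Fin n)) then a ⟨v, h⟩ else x)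
          (if h : v ∈ ({tailSite n k hkn ⟨j, hj⟩}ᶜ : Finset (Fin n)) then b ⟨v, h⟩ else x)))
        ?_
      congr 1
      · rw [dif_neg (by simp), dif_neg (by simp)]
      · refine Finset.prod_congr rfl fun t _ => ?_
        rw [dif_pos ((hmem t.1).2 (Nat.ne_of_lt t.2)), dif_pos ((hmem t.1).2 (Nat.ne_of_lt t.2))]
    · -- tail marginal does not see the defect site
      congr 1 <;>
      · funext s
        rw [dif_pos ((hmem _).2 (by have := s.2; simp only [tailSite]; omega))]
  rw [Finset.sum_congr rfl (fun x _ => key1 x), Finset.sum_congr rfl (fun x _ => key2 x)]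
  rw [← Finset.mul_sum]
  have htr : ∑ x : κ, ρ x x * ((∏ t : {t : Fin n // t.1 < n - k + j},
        ρ (a ⟨t.1, (hmem t.1).2 (Nat.ne_of_lt t.2)⟩) (b ⟨t.1, (hmem t.1).2 (Nat.ne_of_lt t.2)⟩)) *
      ωm k ω (j + 1)
        (fun s => a ⟨tailSite n k hkn s.1, (hmem _).2 (by have := s.2; simp only [tailSite]; omega)⟩)
        (fun s => b ⟨tailSite n k hkn s.1, (hmem _).2 (by have := s.2; simp only [tailSite]; omega)⟩))
      = (∏ t : {t : Fin n // t.1 < n - k + j},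
        ρ (a ⟨t.1, (hmem t.1).2 (Nat.ne_of_lt t.2)⟩) (b ⟨t.1, (hmem t.1).2 (Nat.ne_of_lt t.2)⟩)) *
      ωm k ω (j + 1)
        (fun s => a ⟨tailSite n k hkn s.1, (hmem _).2 (by have := s.2; simp only [tailSite]; omega)⟩)
        (fun s => b ⟨tailSite n k hkn s.1, (hmem _).2 (by have := s.2; simp only [tailSite]; omega)⟩) := by
    rw [← Finset.sum_mul]
    rw [show ∑ x : κ, ρ x x = ρ.trace from rfl, hρ.2, one_mul]
  rw [htr]
  congr 1
  -- the double sum collapses to the marginal over one more coordinate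
  simp only [ωm]
  refine Eq.trans ((Fintype.sum_prod_type (fun p : κ × ({s : Fin k // s.1 < j} → κ) =>
      ω (fun s => if h : s.1 < j then p.2 ⟨s, h⟩ else if h2 : s.1 = j then p.1
          else a ⟨tailSite n k hkn s, (hmem _).2 (by simp only [tailSite]; omega)⟩)
        (fun s => if h : s.1 < j then p.2 ⟨s, h⟩ else if h2 : s.1 = j then p.1
          else b ⟨tailSite n k hkn s, (hmem _).2 (by simp only [tailSite]; omega)⟩))).symm) ?_
  refine Eq.trans ((Equiv.sum_comp (eJ (κ := κ) k j hj).symm (fun p =>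
      ω (fun s => if h : s.1 < j then p.2 ⟨s, h⟩ else if h2 : s.1 = j then p.1
          else a ⟨tailSite n k hkn s, (hmem _).2 (by simp only [tailSite]; omega)⟩)
        (fun s => if h : s.1 < j then p.2 ⟨s, h⟩ else if h2 : s.1 = j then p.1
          else b ⟨tailSite n k hkn s, (hmem _).2 (by simp only [tailSite]; omega)⟩))).symm) ?_
  refine Finset.sum_congr rfl fun g' _ => ?_
  congr 1 <;>
  · funext s
    simp only [eJ, Equiv.coe_fn_symm_mk]
    by_cases h1 : s.1 < j
    · rw [dif_pos h1, dif_pos (show s.1 < j + 1 by omega)]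
    · rw [dif_neg h1]
      by_cases h2 : s.1 = j
      · rw [dif_pos h2, dif_pos (show s.1 < j + 1 by omega)]
        exact congrArg g' (Subtype.ext (Fin.ext (by show j = (s : ℕ); omega)))
      · rw [dif_neg h2, dif_neg (show ¬ (s.1 < j + 1) by omega)]

end Marginals


section Assembly

variable {κ : Type*} [Fintype κ] [DecidableEq κ]

lemma real_smul_matrix {m : Type*} [Fintype m] (r : ℝ) (M : Matrix m m ℂ) :
    r • M = (r : ℂ) • M := by
  ext i j
  simp [Matrix.smul_apply, Complex.real_smul]

/-- The fibre of permutation/defect-index pairs whose defect lands on site `i`. -/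
def Sfib (n k : ℕ) (hkn : k ≤ n) (i : Fin n) : Finset (Equiv.Perm (Fin n) × Fin k) :=
  Finset.filter (fun q => q.1 (tailSite n k hkn q.2) = i) Finset.univ

/-- Averaged interpolating states attached to site `i`. -/
def avg (n k : ℕ) (hkn : k ≤ n) (ρ : Matrix κ κ ℂ) (ω : Matrix (Fin k → κ) (Fin k → κ) ℂ)
    (jm : Fin k → ℕ) (i : Fin n) : Matrix (Fin n → κ) (Fin n → κ) ℂ :=
  if (Sfib n k hkn i).card = 0 then iidOn (Fin n) ρ
  else (((Sfib n k hkn i).card : ℝ))⁻¹ •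
    ∑ q ∈ Sfib n k hkn i, permAction q.1 (σm n k hkn ρ ω (jm q.2))

lemma isState_iidOn {n : ℕ} (hkn : 0 ≤ n) {ρ : Matrix κ κ ℂ} (hρ : IsState ρ) :
    IsState (iidOn (Fin n) ρ) := by
  have h := isState_prodState (fun _ : Fin n => hρ)
  exact h

lemma isState_avg {n k : ℕ} (hkn : k ≤ n) {ρ : Matrix κ κ ℂ}
    {ω : Matrix (Fin k → κ) (Fin k → κ) ℂ} (hρ : IsState ρ) (hω : IsState ω)
    {jm : Fin k → ℕ} (hjm : ∀ j, jm j ≤ k) (i : Fin n) :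
    IsState (avg n k hkn ρ ω jm i) := by
  rw [avg]
  split_ifs with h0
  · exact isState_iidOn (Nat.zero_le n) hρ
  · constructor
    · refine posSemidef_real_smul (posSemidef_sum fun q _ => ?_) (by positivity)
      exact (isState_permAction q.1 (isState_σm hkn hρ hω (hjm q.2))).1
    · rw [Matrix.trace_smul, Matrix.trace_sum]
      rw [Finset.sum_congr rfl (fun q _ =>
        (isState_permAction q.1 (isState_σm hkn hρ hω (hjm q.2))).2)]
      rw [Finset.sum_const, nsmul_eq_mul, mul_one, Complex.real_smul]
      push_cast
      rw [inv_mul_cancel₀ (by exact_mod_cast h0)]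

lemma marginal_avg_eq {n k : ℕ} (hkn : k ≤ n) {ρ : Matrix κ κ ℂ}
    (ω : Matrix (Fin k → κ) (Fin k → κ) ℂ) (hρ : IsState ρ) (i : Fin n) :
    marginal (avg n k hkn ρ ω (fun j => j.1) i) ({i}ᶜ : Finset (Fin n)) =
      marginal (avg n k hkn ρ ω (fun j => j.1 + 1) i) ({i}ᶜ : Finset (Fin n)) := by
  rw [avg, avg]
  split_ifs with h0
  · rfl
  · rw [marginal_smul, marginal_smul, marginal_sum, marginal_sum]
    congr 1
    refine Finset.sum_congr rfl fun q hq => ?_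
    have hqi : q.1.symm i = tailSite n k hkn q.2 := by
      rw [← (Finset.mem_filter.1 hq).2]
      exact Equiv.symm_apply_apply q.1 _
    refine marginal_permAction_congr q.1 i ?_
    rw [hqi]
    exact marginal_σm_succ hkn ω hρ q.2.2

lemma sum_card_Sfib {n k : ℕ} (hkn : k ≤ n) :
    ∑ i : Fin n, (Sfib n k hkn i).card = n.factorial * k := by
  simp only [Sfib]
  rw [Finset.sum_card_fiberwise_eq_card_filter]
  simp only [Finset.mem_univ, Finset.filter_true]
  rw [Finset.card_univ, Fintype.card_prod, Fintype.card_perm, Fintype.card_fin, Fintype.card_fin]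

end Assembly

/-- The symmetrised locally-defective state
`(1/n!) Σ_{π ∈ Sₙ} U_π (ρ^{⊗(n−k)} ⊗ ω) U_π†` is at normalised `W1` distance at most
`k/n` from `ρ^{⊗n}`. -/
theorem W1_symmetrised_defect_le
    {κ : Type*} [Fintype κ] [DecidableEq κ] {n k : ℕ} (hn : 1 ≤ n) (hkn : k ≤ n)
    (ρ : Matrix κ κ ℂ) (hρ : IsState ρ)
    (ω : Matrix (Fin k → κ) (Fin k → κ) ℂ) (hω : IsState ω) :
    (1 / (n : ℝ)) *
        W1 (((n.factorial : ℂ))⁻¹ •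
            (∑ π : Equiv.Perm (Fin n), permAction π (defectState n k hkn ρ ω))
          - iidOn (Fin n) ρ)
      ≤ (k : ℝ) / n := by
  classical
  have hfne : (n.factorial : ℝ) ≠ 0 := by
    exact_mod_cast n.factorial_ne_zero
  set X : Matrix (Fin n → κ) (Fin n → κ) ℂ :=
    ((n.factorial : ℂ))⁻¹ •
        (∑ π : Equiv.Perm (Fin n), permAction π (defectState n k hkn ρ ω))
      - iidOn (Fin n) ρ with hX
  have hW : W1 X ≤ (k : ℝ) := by
    -- the explicit decomposition
    have key : ∀ i : Fin n,
        (((Sfib n k hkn i).card : ℝ) / (n.factorial : ℝ)) •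
          (avg n k hkn ρ ω (fun j => j.1) i - avg n k hkn ρ ω (fun j => j.1 + 1) i)
        = ((n.factorial : ℝ))⁻¹ • ∑ q ∈ Sfib n k hkn i,
            (permAction q.1 (σm n k hkn ρ ω q.2.1) -
              permAction q.1 (σm n k hkn ρ ω (q.2.1 + 1))) := by
      intro i
      rw [avg, avg]
      split_ifs with h0
      · rw [Finset.card_eq_zero.1 h0]
        simp
      · rw [← smul_sub, ← Finset.sum_sub_distrib, smul_smul]
        congr 1
        rw [div_mul_eq_mul_div, mul_inv_cancel₀ (by exact_mod_cast h0), one_div]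
    have htel : ∀ π : Equiv.Perm (Fin n),
        ∑ j : Fin k, (permAction π (σm n k hkn ρ ω j.1) -
            permAction π (σm n k hkn ρ ω (j.1 + 1)))
        = permAction π (σm n k hkn ρ ω 0) - permAction π (σm n k hkn ρ ω k) := by
      intro π
      rw [Fin.sum_univ_eq_sum_range (fun j => permAction π (σm n k hkn ρ ω j) -
        permAction π (σm n k hkn ρ ω (j + 1))) k]
      exact Finset.sum_range_sub' (fun j => permAction π (σm n k hkn ρ ω j)) k
    have hfix : ∀ π : Equiv.Perm (Fin n),
        permAction π (σm n k hkn ρ ω k) = σm n k hkn ρ ω k := by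
      intro π
      rw [σm_top_eq_iid hkn ρ hω, permAction_iid]
    have hXeq : X = ((n.factorial : ℝ))⁻¹ •
        ∑ q : Equiv.Perm (Fin n) × Fin k,
          (permAction q.1 (σm n k hkn ρ ω q.2.1) -
            permAction q.1 (σm n k hkn ρ ω (q.2.1 + 1))) := by
      rw [hX, defect_eq_σm_zero hkn ρ ω, ← σm_top_eq_iid hkn ρ hω]
      rw [real_smul_matrix, Complex.ofReal_inv, Complex.ofReal_natCast]
      rw [Fintype.sum_prod_type]
      rw [Finset.sum_congr rfl (fun π _ => htel π), Finset.sum_sub_distrib]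
      rw [Finset.sum_congr rfl (fun π _ => hfix π), Finset.sum_const, Finset.card_univ,
        Fintype.card_perm, Fintype.card_fin]
      rw [smul_sub, ← Nat.cast_smul_eq_nsmul ℂ, smul_smul,
        inv_mul_cancel₀ (by exact_mod_cast n.factorial_ne_zero), one_smul]
    rw [W1]
    refine csInf_le ⟨0, ?_⟩ ?_
    · rintro w ⟨c, τ, η, hc, -, -, -, -, hw⟩
      rw [hw]
      exact Finset.sum_nonneg fun i _ => hc i
    · refine ⟨fun i => ((Sfib n k hkn i).card : ℝ) / (n.factorial : ℝ),
        fun i => avg n k hkn ρ ω (fun j => j.1) i,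
        fun i => avg n k hkn ρ ω (fun j => j.1 + 1) i,
        fun i => by positivity,
        fun i => isState_avg hkn hρ hω (fun j => le_of_lt j.2) i,
        fun i => isState_avg hkn hρ hω (fun j => j.2) i,
        fun i => marginal_avg_eq hkn ω hρ i, ?_, ?_⟩
      · rw [Finset.sum_congr rfl (fun i _ => key i), ← Finset.smul_sum]
        simp only [Sfib]
        rw [Finset.sum_fiberwise Finset.univ
          (fun q : Equiv.Perm (Fin n) × Fin k => q.1 (tailSite n k hkn q.2))
          (fun q => permAction q.1 (σm n k hkn ρ ω q.2.1) -
            permAction q.1 (σm n k hkn ρ ω (q.2.1 + 1)))]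
        exact hXeq
      · rw [← Finset.sum_div, ← Nat.cast_sum, sum_card_Sfib hkn, Nat.cast_mul,
          mul_comm, mul_div_assoc, div_self hfne, mul_one]
  have h1 : (0 : ℝ) ≤ 1 / (n : ℝ) := by positivity
  calc (1 / (n : ℝ)) * W1 X ≤ (1 / (n : ℝ)) * k := mul_le_mul_of_nonneg_left hW h1
    _ = (k : ℝ) / n := by rw [one_div, inv_mul_eq_div]

end AlmostIID
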